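/- arXiv:2205.02815 — 5 statements merged into one kernel-verified Lean document; each statement's English description precedes it below -/
import Mathlib

section
/- Cycle-joining lemma: let U and V be two cyclic binary sequences, each of length at least n, such that all length-n cyclic substrings of U are distinct, all length-n cyclic substrings of V are distinct, and no length-n string occurs as a substring of both U and V. Suppose there exist a_1,…,a_n ∈ {0,1} such that a_1 a_2 ⋯ a_n is a cyclic substring of U and (1−a_1) a_2 ⋯ a_n is a cyclic substring of V. Then there is a cyclic sequence W of length |U| + |V| whose set of length-n cyclic substrings is exactly the union of those of U and V (and hence all length-n cyclic substrings of W are distinct). -/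
/-- The set of length-`n` cyclic substrings of a cyclic sequence `C` of length `L`. -/
def cycSubs (n : ℕ) {L : ℕ} (C : ZMod L → Bool) : Set (Fin n → Bool) :=
  {f | ∃ i : ZMod L, ∀ k : Fin n, f k = C (i + (k : ℕ))}

/-- All length-`n` cyclic substrings of `C` are distinct. -/
def AllDistinct (n : ℕ) {L : ℕ} (C : ZMod L → Bool) : Prop :=
  ∀ i j : ZMod L, (∀ k : Fin n, C (i + (k : ℕ)) = C (j + (k : ℕ))) → i = j


lemma zmod_add_natCast {L : ℕ} [NeZero L] (i : ZMod L) (m : ℕ) :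
    i + (m : ZMod L) = ((i.val + m : ℕ) : ZMod L) := by
  push_cast [ZMod.natCast_val, ZMod.cast_id]
  rfl

/-- nat version of a cyclic function -/
def natC {L : ℕ} (C : ZMod L → Bool) : ℕ → Bool := fun s => C s

lemma natC_congr {L : ℕ} (C : ZMod L → Bool) {s t : ℕ} (h : s % L = t % L) :
    natC C s = natC C t := by
  unfold natC
  rw [← ZMod.natCast_mod s L, ← ZMod.natCast_mod t L, h]

lemma natC_add_right {L : ℕ} (C : ZMod L → Bool) (s : ℕ) :
    natC C (s + L) = natC C s := natC_congr C (Nat.add_mod_right s L)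

def nwin (n : ℕ) (f : ℕ → Bool) (m : ℕ) : Fin n → Bool := fun k => f (m + k)

lemma nwin_congr {n L : ℕ} (C : ZMod L → Bool) {s t : ℕ} (h : s % L = t % L) :
    nwin n (natC C) s = nwin n (natC C) t := by
  funext k
  exact natC_congr C (Nat.ModEq.add_right _ h)

lemma mem_cycSubs_iff {n L : ℕ} [NeZero L] (C : ZMod L → Bool) (f : Fin n → Bool) :
    f ∈ cycSubs n C ↔ ∃ m : ℕ, f = nwin n (natC C) m := by
  constructor
  · rintro ⟨i, hi⟩
    refine ⟨i.val, funext fun k => ?_⟩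
    rw [hi k, nwin, natC, zmod_add_natCast]
  · rintro ⟨m, rfl⟩
    refine ⟨(m : ZMod L), fun k => ?_⟩
    show natC C (m + (k : ℕ)) = C ((m : ZMod L) + ((k : ℕ) : ZMod L))
    rw [natC]; norm_cast



variable {n LU LV : ℕ} (p q : ℕ) (U : ZMod LU → Bool) (V : ZMod LV → Bool)

/-- the spliced sequence, as a nat-indexed function -/
def wfun (n : ℕ) (p q : ℕ) (U : ZMod LU → Bool) (V : ZMod LV → Bool) : ℕ → Bool :=
  fun s => if s % (LU + LV) < LU then natC U (p + n + s % (LU + LV))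
           else natC V (q + n + (s % (LU + LV) - LU))

lemma wfun_mod (s : ℕ) : wfun n p q U V s = wfun n p q U V (s % (LU + LV)) := by
  simp [wfun, Nat.mod_mod_of_dvd s dvd_rfl]

lemma wfun_add (s : ℕ) : wfun n p q U V (s + (LU + LV)) = wfun n p q U V s := by
  simp [wfun, Nat.add_mod_right]

lemma wfun_low {s : ℕ} (h : s < LU) : wfun n p q U V s = natC U (p + n + s) := by
  have hs : s % (LU + LV) = s := Nat.mod_eq_of_lt (lt_of_lt_of_le h (Nat.le_add_right _ _))
  simp [wfun, hs, h]

lemma wfun_high {s : ℕ} (h1 : LU ≤ s) (h2 : s < LU + LV) :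
    wfun n p q U V s = natC V (q + n + (s - LU)) := by
  have hs : s % (LU + LV) = s := Nat.mod_eq_of_lt h2
  simp [wfun, hs, Nat.not_lt.mpr h1]

section windows

variable (hU : n ≤ LU) (hV : n ≤ LV)
  (hb : ∀ s : ℕ, 1 ≤ s → s < n → natC U (p + s) = natC V (q + s))

include hU hV hb

omit hU hV hb in
lemma winA {m : ℕ} (h : m + n ≤ LU) :
    nwin n (wfun n p q U V) m = nwin n (natC U) (p + n + m) := by
  funext k
  have hk := k.isLt
  show wfun n p q U V (m + k) = natC U (p + n + m + k)
  rw [wfun_low p q U V (by omega)]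
  rw [show p + n + (m + (k : ℕ)) = p + n + m + k from by omega]

omit hU hV hb in
lemma winC {m : ℕ} (h1 : LU ≤ m) (h2 : m + n ≤ LU + LV) :
    nwin n (wfun n p q U V) m = nwin n (natC V) (q + n + (m - LU)) := by
  funext k
  have hk := k.isLt
  show wfun n p q U V (m + k) = natC V (q + n + (m - LU) + k)
  rw [wfun_high p q U V (by omega) (by omega)]
  rw [show q + n + (m + (k : ℕ) - LU) = q + n + (m - LU) + k from by omega]

omit hU in
lemma winB {m : ℕ} (h1 : LU < m + n) (h2 : m < LU) :
    nwin n (wfun n p q U V) m = nwin n (natC V) (q + (m + n - LU)) := by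
  funext k
  have hk := k.isLt
  show wfun n p q U V (m + k) = natC V (q + (m + n - LU) + k)
  by_cases hc : m + (k : ℕ) < LU
  · rw [wfun_low p q U V hc]
    rw [show p + n + (m + (k : ℕ)) = p + (m + n - LU + (k : ℕ)) + LU from by omega,
        natC_add_right, hb _ (by omega) (by omega)]
    rw [show q + (m + n - LU) + (k : ℕ) = q + (m + n - LU + (k : ℕ)) from by omega]
  · rw [wfun_high p q U V (by omega) (by omega)]
    rw [show q + n + (m + (k : ℕ) - LU) = q + (m + n - LU) + k from by omega]

lemma winD {m : ℕ} (h1 : LU + LV < m + n) (h2 : m < LU + LV) :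
    nwin n (wfun n p q U V) m = nwin n (natC U) (p + (m + n - (LU + LV))) := by
  funext k
  have hk := k.isLt
  show wfun n p q U V (m + k) = natC U (p + (m + n - (LU + LV)) + k)
  by_cases hc : m + (k : ℕ) < LU + LV
  · rw [wfun_high p q U V (by omega) hc]
    rw [show q + n + (m + (k : ℕ) - LU) = q + (m + n - (LU + LV) + (k : ℕ)) + LV from by omega,
        natC_add_right]
    rw [show p + (m + n - (LU + LV)) + (k : ℕ) = p + (m + n - (LU + LV) + (k : ℕ)) from by omega]
    exact (hb _ (by omega) (by omega)).symm
  · rw [show m + (k : ℕ) = (m + (k : ℕ) - (LU + LV)) + (LU + LV) from by omega,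
        wfun_add, wfun_low p q U V (by omega)]
    rw [show p + n + (m + (k : ℕ) - (LU + LV)) = p + (m + n - (LU + LV)) + k from by omega]

end windows

lemma nwin_congr' {n L : ℕ} (C : ZMod L → Bool) {s t : ℕ}
    (h : (s : ZMod L) = (t : ZMod L)) : nwin n (natC C) s = nwin n (natC C) t :=
  nwin_congr C ((ZMod.natCast_eq_natCast_iff s t L).mp h)

lemma natCast_val' {L : ℕ} [NeZero L] (x : ZMod L) : ((x.val : ℕ) : ZMod L) = x := by
  simp [ZMod.natCast_val, ZMod.cast_id]

lemma cycSubs_eq_range {n L : ℕ} (C : ZMod L → Bool) :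
    cycSubs n C = Set.range (fun i : ZMod L => fun k : Fin n => C (i + (k : ℕ))) := by
  ext f
  constructor
  · rintro ⟨i, hi⟩; exact ⟨i, (funext fun k => (hi k).symm)⟩
  · rintro ⟨i, rfl⟩; exact ⟨i, fun k => rfl⟩

lemma ncard_cycSubs {n L : ℕ} [NeZero L] (C : ZMod L → Bool) (h : AllDistinct n C) :
    (cycSubs n C).ncard = L := by
  rw [cycSubs_eq_range, ← Nat.card_coe_set_eq,
      Nat.card_range_of_injective (f := fun i : ZMod L => fun k : Fin n => C (i + (k : ℕ)))
        (fun i j hij => h i j (fun k => congrFun hij k)),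
      Nat.card_zmod]


theorem cycle_joining (n LU LV : ℕ) (hn : 0 < n) (hU : n ≤ LU) (hV : n ≤ LV)
    (U : ZMod LU → Bool) (V : ZMod LV → Bool)
    (hUdist : AllDistinct n U) (hVdist : AllDistinct n V)
    (hdisj : Disjoint (cycSubs n U) (cycSubs n V))
    (a : Fin n → Bool) (haU : a ∈ cycSubs n U)
    (haV : Function.update a ⟨0, hn⟩ (!a ⟨0, hn⟩) ∈ cycSubs n V) :
    ∃ W : ZMod (LU + LV) → Bool,
      cycSubs n W = cycSubs n U ∪ cycSubs n V ∧ AllDistinct n W := by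
  classical
  have hLU : 0 < LU := hn.trans_le hU
  have hLV : 0 < LV := hn.trans_le hV
  haveI : NeZero LU := ⟨hLU.ne'⟩
  haveI : NeZero LV := ⟨hLV.ne'⟩
  haveI : NeZero (LU + LV) := ⟨by omega⟩
  obtain ⟨i₀, hi₀⟩ := haU
  obtain ⟨j₀, hj₀⟩ := haV
  set p := i₀.val with hp
  set q := j₀.val with hq
  -- pointwise values
  have hu : ∀ k : Fin n, natC U (p + (k : ℕ)) = a k := by
    intro k
    show U ((p + (k : ℕ) : ℕ) : ZMod LU) = a k
    rw [← zmod_add_natCast i₀ (k : ℕ), ← hi₀]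
  have hv : ∀ k : Fin n, natC V (q + (k : ℕ)) = Function.update a ⟨0, hn⟩ (!a ⟨0, hn⟩) k := by
    intro k
    show V ((q + (k : ℕ) : ℕ) : ZMod LV) = _
    rw [← zmod_add_natCast j₀ (k : ℕ), ← hj₀]
  -- the bridge
  have hb : ∀ s : ℕ, 1 ≤ s → s < n → natC U (p + s) = natC V (q + s) := by
    intro s h1 h2
    have h3 : ((⟨s, h2⟩ : Fin n) : ℕ) = s := rfl
    rw [← h3, hu ⟨s, h2⟩, hv ⟨s, h2⟩, Function.update_of_ne (by simp [Fin.ext_iff]; omega)]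
  set w : ℕ → Bool := wfun n p q U V with hwdef
  set W : ZMod (LU + LV) → Bool := fun t => w t.val with hWdef
  -- evaluating W on shifted indices
  have hW : ∀ (i : ZMod (LU + LV)) (k : Fin n), W (i + ((k : ℕ) : ZMod (LU + LV))) = w (i.val + k) := by
    intro i k
    show w ((i + ((k : ℕ) : ZMod (LU + LV))).val) = w (i.val + k)
    rw [zmod_add_natCast, ZMod.val_natCast, hwdef, ← wfun_mod]
  -- membership characterization for W
  have hWmem : ∀ f : Fin n → Bool, f ∈ cycSubs n W ↔ ∃ i : ZMod (LU + LV), f = nwin n w i.val := by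
    intro f
    constructor
    · rintro ⟨i, hi⟩
      exact ⟨i, funext fun k => (hi k).trans (hW i k)⟩
    · rintro ⟨i, rfl⟩
      exact ⟨i, fun k => (hW i k).symm⟩
  -- the set equality
  have hset : cycSubs n W = cycSubs n U ∪ cycSubs n V := by
    ext f
    rw [hWmem]
    constructor
    · rintro ⟨i, rfl⟩
      set m := i.val with hm
      have hmL : m < LU + LV := ZMod.val_lt i
      by_cases h1 : m + n ≤ LU
      · left
        rw [mem_cycSubs_iff]
        exact ⟨p + n + m, by rw [hwdef, winA p q U V h1]⟩
      · by_cases h2 : m < LU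
        · right
          rw [mem_cycSubs_iff]
          exact ⟨q + (m + n - LU), by rw [hwdef, winB p q U V hV hb (by omega) h2]⟩
        · by_cases h3 : m + n ≤ LU + LV
          · right
            rw [mem_cycSubs_iff]
            exact ⟨q + n + (m - LU), by rw [hwdef, winC p q U V (by omega) h3]⟩
          · left
            rw [mem_cycSubs_iff]
            exact ⟨p + (m + n - (LU + LV)),
              by rw [hwdef, winD p q U V hU hV hb (by omega) hmL]⟩
    · rintro (hf | hf)
      · rw [mem_cycSubs_iff] at hf
        obtain ⟨m₀, rfl⟩ := hf
        -- choose r ∈ [1, LU] with p + r ≡ m₀ [MOD LU]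
        set δ : ZMod LU := (m₀ : ZMod LU) - (p : ZMod LU) with hδ
        set r : ℕ := if δ.val = 0 then LU else δ.val with hr
        have hr1 : 1 ≤ r := by
          rw [hr]; split <;> omega
        have hr2 : r ≤ LU := by
          have := ZMod.val_lt δ
          rw [hr]; split <;> omega
        have hcast : ((p + r : ℕ) : ZMod LU) = (m₀ : ZMod LU) := by
          have hrc : ((r : ℕ) : ZMod LU) = δ := by
            rw [hr]; split_ifs with hd
            · rw [show δ = 0 from (ZMod.val_eq_zero δ).mp hd]
              exact ZMod.natCast_self LU
            · exact natCast_val' δ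
          push_cast
          rw [hrc, hδ]
          ring
        have hwin : nwin n (natC U) (p + r) = nwin n (natC U) m₀ := nwin_congr' U hcast
        by_cases hrn : n ≤ r
        · refine ⟨((r - n : ℕ) : ZMod (LU + LV)), ?_⟩
          have hval : ((r - n : ℕ) : ZMod (LU + LV)).val = r - n := by
            rw [ZMod.val_natCast]; exact Nat.mod_eq_of_lt (by omega)
          rw [hval, hwdef, winA p q U V (by omega),
              show p + n + (r - n) = p + r from by omega, hwin]
        · refine ⟨(((LU + LV) + r - n : ℕ) : ZMod (LU + LV)), ?_⟩
          have hval : (((LU + LV) + r - n : ℕ) : ZMod (LU + LV)).val = (LU + LV) + r - n := by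
            rw [ZMod.val_natCast]; exact Nat.mod_eq_of_lt (by omega)
          rw [hval, hwdef, winD p q U V hU hV hb (by omega) (by omega),
              show p + ((LU + LV) + r - n + n - (LU + LV)) = p + r from by omega, hwin]
      · rw [mem_cycSubs_iff] at hf
        obtain ⟨m₀, rfl⟩ := hf
        set δ : ZMod LV := (m₀ : ZMod LV) - (q : ZMod LV) with hδ
        set r : ℕ := if δ.val = 0 then LV else δ.val with hr
        have hr1 : 1 ≤ r := by
          rw [hr]; split <;> omega
        have hr2 : r ≤ LV := by
          have := ZMod.val_lt δ
          rw [hr]; split <;> omega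
        have hcast : ((q + r : ℕ) : ZMod LV) = (m₀ : ZMod LV) := by
          have hrc : ((r : ℕ) : ZMod LV) = δ := by
            rw [hr]; split_ifs with hd
            · rw [show δ = 0 from (ZMod.val_eq_zero δ).mp hd]
              exact ZMod.natCast_self LV
            · exact natCast_val' δ
          push_cast
          rw [hrc, hδ]
          ring
        have hwin : nwin n (natC V) (q + r) = nwin n (natC V) m₀ := nwin_congr' V hcast
        refine ⟨((LU + r - n : ℕ) : ZMod (LU + LV)), ?_⟩
        have hval : ((LU + r - n : ℕ) : ZMod (LU + LV)).val = LU + r - n := by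
          rw [ZMod.val_natCast]; exact Nat.mod_eq_of_lt (by omega)
        by_cases hrn : n ≤ r
        · rw [hval, hwdef, winC p q U V (by omega) (by omega),
              show q + n + (LU + r - n - LU) = q + r from by omega, hwin]
        · rw [hval, hwdef, winB p q U V hV hb (by omega) (by omega),
              show q + (LU + r - n + n - LU) = q + r from by omega, hwin]
  refine ⟨W, hset, ?_⟩
  -- AllDistinct via cardinality
  have hrange : Set.range (fun i : ZMod (LU + LV) => nwin n w i.val)
      = cycSubs n U ∪ cycSubs n V := by
    rw [← hset]
    ext f
    rw [hWmem]
    constructor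
    · rintro ⟨i, rfl⟩; exact ⟨i, rfl⟩
    · rintro ⟨i, rfl⟩; exact ⟨i, rfl⟩
  have hinj : Function.Injective (fun i : ZMod (LU + LV) => nwin n w i.val) := by
    rw [← Set.injOn_univ]
    apply Set.injOn_of_ncard_image_eq _ (Set.toFinite _)
    rw [Set.image_univ, hrange,
        Set.ncard_union_eq hdisj (Set.toFinite _) (Set.toFinite _),
        ncard_cycSubs U hUdist, ncard_cycSubs V hVdist, Set.ncard_univ, Nat.card_zmod]
  intro i j hij
  apply hinj
  funext k
  show w (i.val + k) = w (j.val + k)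
  rw [← hW i k, ← hW j k]
  exact hij k
end

section
/- The map F: {0,1}^n → {0,1}^n defined by F(a_1 a_2 ⋯ a_n) = a_2 a_3 ⋯ a_n x, where x = 1 − a_1 if a_2 a_3 ⋯ a_n 1 is a necklace and x = a_1 otherwise, is a bijection. -/
/-- A binary necklace: lexicographically less than or equal to all its rotations. -/
def IsNecklace (l : List Bool) : Prop :=
  ∀ r : ℕ, r < l.length → l ≤ l.rotate r

instance : DecidablePred IsNecklace := fun l =>
  decidable_of_iff (∀ r : ℕ, r < l.length → l ≤ l.rotate r) Iff.rfl

/-- The PCR3 feedback shift register: shift left and append `1 - a₁` if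
`a₂ ⋯ aₙ 1` is a necklace, and `a₁` otherwise. -/
def pcr3 (a : List Bool) : List Bool :=
  a.tail ++ [if IsNecklace (a.tail ++ [true]) then !a.headI else a.headI]

/-! The feedback bit is `a₁` or its negation, depending only on `a₂ ⋯ aₙ`, so `a₁` can be read
back from the image; an injective self-map of the finite set `{0,1}ⁿ` is a bijection. -/

def feedbackShift {α : Type*} [Inhabited α] (f : α → List α → α) (a : List α) : List α :=
  a.tail ++ [f a.headI a.tail]

section FeedbackShift

variable {α : Type*} [Inhabited α] (f : α → List α → α)

theorem length_feedbackShift (a : List α) : (feedbackShift f a).length = a.length - 1 + 1 := by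
  simp [feedbackShift]

theorem feedbackShift_cons (x : α) (t : List α) : feedbackShift f (x :: t) = t ++ [f x t] := rfl

theorem feedbackShift_mapsTo {n : ℕ} (hn : 0 < n) :
    Set.MapsTo (feedbackShift f) {l | l.length = n} {l | l.length = n} := by
  intro a (ha : a.length = n)
  change (feedbackShift f a).length = n
  rw [length_feedbackShift]
  omega

theorem feedbackShift_injOn (hf : ∀ t, Function.Injective (f · t)) :
    Set.InjOn (feedbackShift f) {l | l ≠ []} := by
  rintro (_ | ⟨x, t⟩) ha (_ | ⟨y, s⟩) hb h
  · exact absurd rfl ha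
  · exact absurd rfl ha
  · exact absurd rfl hb
  rw [feedbackShift_cons, feedbackShift_cons] at h
  obtain ⟨rfl, hlast⟩ := List.append_inj' h rfl
  rw [hf t (List.singleton_injective hlast)]

theorem feedbackShift_bijOn [Finite α] (hf : ∀ t, Function.Injective (f · t)) {n : ℕ}
    (hn : 0 < n) : Set.BijOn (feedbackShift f) {l | l.length = n} {l | l.length = n} :=
  ((List.finite_length_eq α n).injOn_iff_bijOn_of_mapsTo (feedbackShift_mapsTo f hn)).mp <|
    (feedbackShift_injOn f hf).mono fun _ (ha : _ = n) => List.ne_nil_of_length_pos (ha ▸ hn)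

end FeedbackShift

theorem pcr3_eq_feedbackShift :
    pcr3 = feedbackShift fun x t => if IsNecklace (t ++ [true]) then !x else x := rfl

theorem pcr3_bijective (n : ℕ) (hn : 0 < n) :
    Set.BijOn pcr3 {l : List Bool | l.length = n} {l : List Bool | l.length = n} := by
  rw [pcr3_eq_feedbackShift]
  refine feedbackShift_bijOn _ (fun t => ?_) hn
  split_ifs
  · exact Bool.not_injective
  · exact Function.injective_id
end

section
/- Let F: {0,1}^n → {0,1}^n be defined by F(a_1 ⋯ a_n) = a_2 ⋯ a_n x, where x = 1 − a_1 if a_2 ⋯ a_n 1 is a necklace, and x = a_1 otherwise. Then F is a cyclic permutation of {0,1}^n of order 2^n; that is, iterating F from any starting string visits all 2^n binary strings of length n before returning to the start. -/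
/-- explicit inverse of pcr3 -/
def ginv (b : List Bool) : List Bool :=
  (if IsNecklace (b.dropLast ++ [true]) then !(b.getLastD false) else b.getLastD false)
    :: b.dropLast

lemma pcr3_cons (y : Bool) (t : List Bool) :
    pcr3 (y :: t) = t ++ [if IsNecklace (t ++ [true]) then !y else y] := rfl

lemma ginv_concat (t : List Bool) (u : Bool) :
    ginv (t ++ [u]) = (if IsNecklace (t ++ [true]) then !u else u) :: t := by
  simp [ginv, List.dropLast_concat, List.getLastD_concat]

lemma pcr3_ginv {b : List Bool} (hb : b ≠ []) : pcr3 (ginv b) = b := by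
  obtain ⟨t, u, rfl⟩ := (List.eq_nil_or_concat _).resolve_left hb
  rw [List.concat_eq_append] at *
  rw [ginv_concat, pcr3_cons]
  by_cases h : IsNecklace (t ++ [true]) <;> simp [h]

lemma ginv_ne_nil (b : List Bool) : ginv b ≠ [] := by simp [ginv]

lemma length_ginv {b : List Bool} (hb : b ≠ []) : (ginv b).length = b.length := by
  obtain ⟨t, u, rfl⟩ := (List.eq_nil_or_concat _).resolve_left hb
  rw [List.concat_eq_append] at *
  rw [ginv_concat]; simp

lemma length_pcr3 {b : List Bool} (hb : b ≠ []) : (pcr3 b).length = b.length := by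
  obtain ⟨y, t, rfl⟩ := List.exists_cons_of_ne_nil hb
  rw [pcr3_cons]; simp
-- rotation lemmas
lemma rot_concat (t : List Bool) (u : Bool) : (t ++ [u]).rotate t.length = u :: t := by
  rw [List.rotate_eq_drop_append_take (by simp)]
  simp

lemma rot_cons (u : Bool) (t : List Bool) : (u :: t).rotate 1 = t ++ [u] := by
  simp [List.rotate_cons_succ]

lemma rot_cancel (M : List Bool) (s : ℕ) : M.rotate (s + M.length) = M.rotate s := by
  rw [← List.rotate_rotate, ← List.length_rotate M s, List.rotate_length]

lemma necklace_le_rotate {l : List Bool} (h : IsNecklace l) (r : ℕ) : l ≤ l.rotate r := by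
  rcases eq_or_ne l [] with rfl | hl
  · simp
  · rw [← List.rotate_mod]
    rcases Nat.eq_zero_or_pos (r % l.length) with h0 | h0
    · simp [h0]
    · exact h _ (Nat.mod_lt _ (List.length_pos_iff.mpr hl))

lemma necklace_unique {M z : List Bool} (hM : IsNecklace M) (hz : IsNecklace z)
    {s : ℕ} (h : z = M.rotate s) : z = M := by
  have h1 : M ≤ z := h ▸ necklace_le_rotate hM s
  have h2 : M = z.rotate (M.length - s % M.length) := by
    rcases eq_or_ne M [] with rfl | hl
    · simp [h]
    · rw [h, ← List.rotate_mod M s, List.rotate_rotate,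
        Nat.add_sub_cancel' (le_of_lt (Nat.mod_lt _ (List.length_pos_iff.mpr hl))), List.rotate_length]
  have h3 : z ≤ M := h2 ▸ necklace_le_rotate hz _
  exact le_antisymm h3 h1

-- key lex lemma
lemma all_false_of_concat_le (l : List Bool) (h : l ++ [false] ≤ false :: l) :
    l = List.replicate l.length false := by
  induction l with
  | nil => rfl
  | cons b l ih =>
    cases b
    · have h' : l ++ [false] ≤ false :: l := by
        by_contra hc
        have hlt : false :: l < l ++ [false] := lt_of_not_ge hc
        have : (false : Bool) :: false :: l < false :: (l ++ [false]) := List.Lex.cons hlt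
        exact absurd (lt_of_le_of_lt h this) (lt_irrefl _)
      rw [List.length_cons, List.replicate_succ, ih h']
      simp
    · exfalso
      have hlt : (false : Bool) :: true :: l < true :: (l ++ [false]) :=
        List.Lex.rel (by decide)
      exact absurd (lt_of_le_of_lt h hlt) (lt_irrefl _)

lemma necklace_concat_false {t : List Bool} (h : IsNecklace (t ++ [false])) :
    t = List.replicate t.length false := by
  have hle : t ++ [false] ≤ false :: t := by
    have := h t.length (by simp)
    rwa [show (t ++ [false]).rotate t.length = false :: t from ?_] at this
    rw [List.rotate_eq_drop_append_take (by simp)]; simp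
  exact all_false_of_concat_le t hle

lemma reach_necklace : ∀ (k : ℕ) (M : List Bool), IsNecklace M → M.count false ≤ k →
    ∀ (s : ℕ) (z : List Bool), z = M.rotate s → ∃ j, ginv^[j] z = M := by
  intro k
  induction k using Nat.strong_induction_on with
  | _ k IH =>
  intro M hM hcount s
  induction s with
  | zero => intro z hz; exact ⟨0, by simpa using hz⟩
  | succ s ihs =>
    intro z hz
    by_cases hzM : z = M
    · exact ⟨0, hzM⟩
    have hMne : M ≠ [] := by rintro rfl; exact hzM (by simpa using hz)
    have hlenz : z.length = M.length := by rw [hz, List.length_rotate]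
    have hzne : z ≠ [] := by
      intro h0
      exact hMne (List.length_eq_zero_iff.mp (by rw [← hlenz, h0]; rfl))
    obtain ⟨t, u, rfl⟩ := (List.eq_nil_or_concat z).resolve_left hzne
    rw [List.concat_eq_append] at hz hzM hlenz ⊢
    have hlen : t.length + 1 = M.length := by simpa using hlenz
    by_cases hc : IsNecklace (t ++ [true])
    · cases u with
      | true => exact absurd (necklace_unique hM hc hz) hzM
      | false =>
        have hcnt : (t ++ [false]).count false = M.count false := by
          rw [hz]; exact (M.rotate_perm (s+1)).count_eq false
        have hct : t.count false + 1 ≤ k := by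
          have h5 : (t ++ [false]).count false = t.count false + 1 := by simp
          omega
        have hlt' : (t ++ [true]).count false < k := by
          have h6 : (t ++ [true]).count false = t.count false := by simp
          omega
        obtain ⟨j₁, hj₁⟩ :=
          IH _ hlt' (t ++ [true]) hc le_rfl t.length (true :: t) (rot_concat t true).symm
        have e1 : ginv (t ++ [false]) = true :: t := by rw [ginv_concat]; simp [hc]
        have e2 : ginv (t ++ [true]) = false :: t := by rw [ginv_concat]; simp [hc]
        have e3 : false :: t = M.rotate s := by
          have h7 : ((t ++ [false]).rotate t.length) = false :: t := rot_concat t false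
          rw [hz] at h7
          rw [← h7, List.rotate_rotate, show s + 1 + t.length = s + M.length by omega,
            rot_cancel]
        obtain ⟨j₂, hj₂⟩ := ihs (false :: t) e3
        refine ⟨j₂ + (1 + (j₁ + 1)), ?_⟩
        simp only [Function.iterate_add_apply, Function.iterate_succ_apply,
          Function.iterate_zero_apply, Function.iterate_one]
        rw [e1, hj₁, e2, hj₂]
    · have e1 : ginv (t ++ [u]) = u :: t := by rw [ginv_concat]; simp [hc]
      have e3 : u :: t = M.rotate s := by
        have h7 : ((t ++ [u]).rotate t.length) = u :: t := rot_concat t u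
        rw [hz] at h7
        rw [← h7, List.rotate_rotate, show s + 1 + t.length = s + M.length by omega,
          rot_cancel]
      obtain ⟨j₂, hj₂⟩ := ihs (u :: t) e3
      exact ⟨j₂ + 1, by rw [Function.iterate_succ_apply, e1, hj₂]⟩

lemma exists_necklace_rotation (x : List Bool) (hx : x ≠ []) :
    ∃ M s, IsNecklace M ∧ x = M.rotate s := by
  classical
  have hxpos : 0 < x.length := List.length_pos_iff.mpr hx
  set L := (List.range x.length).map (x.rotate ·) with hL
  have hLne : L ≠ [] := by
    simp only [hL, ne_eq, List.map_eq_nil_iff, List.range_eq_nil]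
    omega
  obtain ⟨M, hmin⟩ : ∃ M : List Bool, L.minimum = (M : WithTop (List Bool)) := by
    cases hmin : L.minimum with
    | top => exact absurd (List.minimum_eq_top.mp hmin) hLne
    | coe M => exact ⟨M, rfl⟩
  have hMmem : M ∈ L := List.minimum_mem hmin
  obtain ⟨i, hi, hMi⟩ : ∃ i, i < x.length ∧ x.rotate i = M := by
    simp only [hL, List.mem_map, List.mem_range] at hMmem
    obtain ⟨i, hi, h⟩ := hMmem; exact ⟨i, hi, h⟩
  have hMlen : M.length = x.length := by rw [← hMi, List.length_rotate]
  have hxM : x = M.rotate (x.length - i) := by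
    rw [← hMi, List.rotate_rotate, Nat.add_sub_cancel' (le_of_lt hi), List.rotate_length]
  refine ⟨M, x.length - i, ?_, hxM⟩
  intro r hr
  have hmem : M.rotate r ∈ L := by
    have : M.rotate r = x.rotate ((i + r) % x.length) := by
      rw [← hMi, List.rotate_rotate, List.rotate_mod]
    rw [this]
    simp only [hL, List.mem_map, List.mem_range]
    exact ⟨(i + r) % x.length, Nat.mod_lt _ hxpos, rfl⟩
  exact List.minimum_le_of_mem hmem (by convert hmin)

lemma reach_zero : ∀ (c : ℕ) (x : List Bool), x ≠ [] → x.count true ≤ c →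
    ∃ j, ginv^[j] x = List.replicate x.length false := by
  intro c
  induction c using Nat.strong_induction_on with
  | _ c IH =>
  intro x hx hc
  by_cases h0 : x.count true = 0
  · refine ⟨0, ?_⟩
    simp only [Function.iterate_zero_apply]
    refine List.eq_replicate_iff.mpr ⟨rfl, fun b hb => ?_⟩
    cases b
    · rfl
    · exact absurd (List.count_eq_zero.mp h0 hb) (by simp)  -- maybe adjust
  · obtain ⟨M, s, hM, hxM⟩ := exists_necklace_rotation x hx
    have hMne : M ≠ [] := by
      rintro rfl; simp at hxM; exact hx hxM
    have hcnt : M.count true = x.count true := by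
      rw [hxM]; exact ((M.rotate_perm s).count_eq true).symm
    obtain ⟨t, u, htu⟩ := (List.eq_nil_or_concat M).resolve_left hMne
    rw [List.concat_eq_append] at htu
    subst htu
    have hlast : u = true := by
      cases u
      · exfalso
        have := necklace_concat_false hM
        apply h0
        rw [← hcnt, this]
        simp [List.count_replicate]
      · rfl
    subst hlast
    obtain ⟨j₁, hj₁⟩ := reach_necklace ((t ++ [true]).count false) _ hM le_rfl s x hxM
    have e2 : ginv (t ++ [true]) = false :: t := by
      rw [ginv_concat]; simp [hM]
    have hct : (false :: t).count true < c := by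
      have h8 : (t ++ [true]).count true = t.count true + 1 := by simp
      have h9 : (false :: t).count true = t.count true := by simp
      omega
    obtain ⟨j₂, hj₂⟩ := IH _ hct (false :: t) (by simp) le_rfl
    refine ⟨j₂ + (1 + j₁), ?_⟩
    rw [Function.iterate_add_apply, Function.iterate_add_apply, Function.iterate_one,
      hj₁, e2, hj₂]
    have hxlen : x.length = t.length + 1 := by
      rw [hxM, List.length_rotate]; simp
    simp [hxlen]

lemma pcr3_iterate_ginv_iterate : ∀ (j : ℕ) (b : List Bool), b ≠ [] →
    pcr3^[j] (ginv^[j] b) = b := by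
  intro j
  induction j with
  | zero => intro b _; rfl
  | succ j ih =>
    intro b hb
    rw [Function.iterate_succ_apply' (f := ginv), Function.iterate_succ_apply (f := pcr3)]
    have hne : ginv^[j] b ≠ [] := by
      cases j with
      | zero => exact hb
      | succ j => rw [Function.iterate_succ_apply']; exact ginv_ne_nil _
    rw [pcr3_ginv hne]
    exact ih b hb

lemma pcr3_surj_from_zero (n : ℕ) (hn : 0 < n) (b : List Bool) (hb : b.length = n) :
    ∃ j, pcr3^[j] (List.replicate n false) = b := by
  have hbne : b ≠ [] := by
    intro h; rw [h] at hb; simp at hb; omega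
  obtain ⟨j, hj⟩ := reach_zero (b.count true) b hbne le_rfl
  refine ⟨j, ?_⟩
  rw [hb] at hj
  rw [← hj, pcr3_iterate_ginv_iterate j b hbne]

def Fv (n : ℕ) (hn : 0 < n) (v : List.Vector Bool n) : List.Vector Bool n :=
  ⟨pcr3 v.1, by
    rw [length_pcr3 (by intro h; have := v.2; rw [h] at this; simp at this; omega)]
    exact v.2⟩

def Gv (n : ℕ) (hn : 0 < n) (v : List.Vector Bool n) : List.Vector Bool n :=
  ⟨ginv v.1, by
    rw [length_ginv (by intro h; have := v.2; rw [h] at this; simp at this; omega)]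
    exact v.2⟩

lemma Fv_iter (n : ℕ) (hn : 0 < n) (k : ℕ) (v : List.Vector Bool n) :
    ((Fv n hn)^[k] v).1 = pcr3^[k] v.1 := by
  induction k with
  | zero => rfl
  | succ k ih =>
    rw [Function.iterate_succ_apply' (f := Fv n hn), Function.iterate_succ_apply' (f := pcr3)]
    show pcr3 ((Fv n hn)^[k] v).1 = _
    rw [ih]

lemma Fv_Gv (n : ℕ) (hn : 0 < n) (v : List.Vector Bool n) : Fv n hn (Gv n hn v) = v := by
  apply Subtype.ext
  show pcr3 (ginv v.1) = v.1
  apply pcr3_ginv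
  intro h; have := v.2; rw [h] at this; simp at this; omega

/-- `pcr3` permutes the binary strings of length `n` in a single cycle of
length `2 ^ n`: iterating from any start visits every length-`n` binary string
before returning to the start. -/
theorem pcr3_cyclic (n : ℕ) (hn : 0 < n) (a : List Bool) (ha : a.length = n) :
    pcr3^[2 ^ n] a = a ∧
      ∀ b : List Bool, b.length = n → ∃ k : ℕ, k < 2 ^ n ∧ pcr3^[k] a = b := by
  classical
  set T := 2 ^ n with hT
  have hTpos : 0 < T := Nat.pow_pos (by norm_num)
  set F := Fv n hn with hF
  set v0 : List.Vector Bool n := ⟨List.replicate n false, by simp⟩ with hv0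
  have hcard : Fintype.card (List.Vector Bool n) = T := by simp [hT, card_vector]
  have hsurj : ∀ w : List.Vector Bool n, ∃ j, F^[j] v0 = w := by
    intro w
    obtain ⟨j, hj⟩ := pcr3_surj_from_zero n hn w.1 w.2
    exact ⟨j, Subtype.ext (by rw [Fv_iter]; exact hj)⟩
  have hFsurj : Function.Surjective F := fun w => ⟨Gv n hn w, Fv_Gv n hn w⟩
  have hFinj : Function.Injective F := Finite.injective_iff_surjective.mpr hFsurj
  -- pigeonhole: find a period q ≤ T
  obtain ⟨q, hq1, hq2, hqper⟩ : ∃ q, 1 ≤ q ∧ q ≤ T ∧ F^[q] v0 = v0 := by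
    obtain ⟨i, j, hne, heq⟩ := Fintype.exists_ne_map_eq_of_card_lt
      (fun i : Fin (T + 1) => F^[(i : ℕ)] v0) (by rw [hcard]; simp)
    rcases lt_or_gt_of_ne hne with hij | hij
    · refine ⟨(j : ℕ) - i, by omega, by have := j.2; omega, ?_⟩
      have : F^[(i : ℕ)] (F^[(j : ℕ) - i] v0) = F^[(i : ℕ)] v0 := by
        rw [← Function.iterate_add_apply, show (i : ℕ) + ((j : ℕ) - i) = (j : ℕ) by omega]
        exact heq.symm
      exact (hFinj.iterate (i : ℕ)) this
    · refine ⟨(i : ℕ) - j, by omega, by have := i.2; omega, ?_⟩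
      have : F^[(j : ℕ)] (F^[(i : ℕ) - j] v0) = F^[(j : ℕ)] v0 := by
        rw [← Function.iterate_add_apply, show (j : ℕ) + ((i : ℕ) - j) = (i : ℕ) by omega]
        exact heq
      exact (hFinj.iterate (j : ℕ)) this
  have hper : ∀ m, F^[m] v0 = F^[m % q] v0 :=
    fun m => ((Function.IsPeriodicPt.iterate_mod_apply hqper m)).symm
  have hsurj' : ∀ w : List.Vector Bool n, ∃ k, k < q ∧ F^[k] v0 = w := by
    intro w
    obtain ⟨j, hj⟩ := hsurj w
    exact ⟨j % q, Nat.mod_lt _ hq1, by rw [← hper]; exact hj⟩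
  have hqT : q = T := by
    have h1 : Fintype.card (List.Vector Bool n) ≤ Fintype.card (Fin q) := by
      apply Fintype.card_le_of_surjective (fun i : Fin q => F^[(i : ℕ)] v0)
      intro w
      obtain ⟨k, hk, hkw⟩ := hsurj' w
      exact ⟨⟨k, hk⟩, hkw⟩
    rw [hcard, Fintype.card_fin] at h1
    omega
  have hperT : ∀ m, F^[m] v0 = F^[m % T] v0 := hqT ▸ hper
  have hsurjT : ∀ w : List.Vector Bool n, ∃ k, k < T ∧ F^[k] v0 = w := hqT ▸ hsurj'
  set va : List.Vector Bool n := ⟨a, ha⟩ with hva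
  obtain ⟨k₀, hk₀, h₀⟩ := hsurjT va
  constructor
  · have hv : F^[T] va = va := by
      rw [← h₀, ← Function.iterate_add_apply, Nat.add_comm, Function.iterate_add_apply,
        ← hqT, hqper]
    have := congrArg Subtype.val hv
    rw [Fv_iter] at this
    exact this
  · intro b hb
    obtain ⟨k₁, hk₁, h₁⟩ := hsurjT ⟨b, hb⟩
    refine ⟨(k₁ + (T - k₀)) % T, Nat.mod_lt _ hTpos, ?_⟩
    have hv : F^[(k₁ + (T - k₀)) % T] va = ⟨b, hb⟩ := by
      rw [← h₀, ← Function.iterate_add_apply, hperT]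
      have : ((k₁ + (T - k₀)) % T + k₀) % T = k₁ := by
        rw [Nat.mod_add_mod, Nat.add_assoc, Nat.sub_add_cancel (le_of_lt hk₀),
          Nat.add_mod_right, Nat.mod_eq_of_lt hk₁]
      rw [this]
      exact h₁
    have := congrArg Subtype.val hv
    rw [Fv_iter] at this
    exact this
end

section
/- For every n ≥ 1 and every integer L with 1 ≤ L ≤ 2^n, there exists a cyclic binary sequence of length L in which every cyclic substring of length n occurs at most once. -/
/-! ### Generic helpers -/

lemma allDistinct_mono {m n L : ℕ} (hmn : m ≤ n) {C : ZMod L → Bool}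
    (h : AllDistinct m C) : AllDistinct n C := by
  intro i j hij
  exact h i j fun k => hij ⟨k.1, lt_of_lt_of_le k.2 hmn⟩

lemma zmod2_eq_of_decide {a b : ZMod 2}
    (h : decide (a = 1) = decide (b = 1)) : a = b := by revert h; revert a b; decide

lemma zmod2_eq_zero_of_ne_one {a : ZMod 2} (h : ¬ a = 1) : a = 0 := by
  revert h; revert a; decide

/-! ### Existence of an `m`-sequence (LFSR sequence) with the needed features.

We produce `f : ℕ → Bool` of period `N = 2^m - 1` whose length-`m` windows are
pairwise distinct (as cyclic windows), which has a run of `m - 1` zeros starting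
at `r`, no all-zero window of length `m`, and for each `0 < l < N` a position `p`
whose window of length `m-1` agrees with the one at `p + l`. -/

lemma exists_mseq (m : ℕ) (hm : 1 ≤ m) :
    ∃ (f : ℕ → Bool) (r : ℕ),
      (∀ j, f (j + (2 ^ m - 1)) = f j) ∧
      (∀ p q : ℕ, (∀ k, k < m → f (p + k) = f (q + k)) → p ≡ q [MOD 2 ^ m - 1]) ∧
      (∀ i, i < m - 1 → f (r + i) = false) ∧
      (∀ a : ℕ, ∃ k, k < m ∧ f (a + k) = true) ∧
      (∀ l, 0 < l → l < 2 ^ m - 1 →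
        ∃ p, ∀ s, s < m - 1 → f (p + s) = f (p + l + s)) := by
  haveI : Fact (Nat.Prime 2) := ⟨Nat.prime_two⟩
  set K := GaloisField 2 m with hK
  haveI : Fintype K := Fintype.ofFinite K
  haveI : DecidableEq K := Classical.decEq K
  have hcard : Fintype.card K = 2 ^ m := by
    rw [← Nat.card_eq_fintype_card]
    exact GaloisField.card 2 m (by omega)
  set N := 2 ^ m - 1 with hN
  have h2m : 2 ≤ 2 ^ m := by
    calc 2 = 2 ^ 1 := rfl
    _ ≤ 2 ^ m := Nat.pow_le_pow_right (by norm_num) hm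
  have hN1 : 1 ≤ N := by omega
  obtain ⟨g, hg⟩ := IsCyclic.exists_generator (α := Kˣ)
  have hordu : orderOf g = N := by
    rw [orderOf_eq_card_of_forall_mem_zpowers hg, Nat.card_eq_fintype_card,
      Fintype.card_units, hcard]
  set γ : K := (g : K) with hγ
  have hγ0 : γ ≠ 0 := Units.ne_zero g
  have hord : orderOf γ = N := by rw [hγ, orderOf_units, hordu]
  have hγN : γ ^ N = 1 := by rw [← hord]; exact pow_orderOf_eq_one γ
  -- discrete logarithm
  have dlog : ∀ x : K, x ≠ 0 → ∃ p : ℕ, γ ^ p = x := by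
    intro x hx
    obtain ⟨k, hk⟩ := Subgroup.mem_zpowers_iff.mp (hg (Units.mk0 x hx))
    have hNpos : (0 : ℤ) < (N : ℤ) := by exact_mod_cast hN1
    refine ⟨(k % (N : ℤ)).toNat, ?_⟩
    have h1 : g ^ (((k % (N : ℤ)).toNat : ℤ)) = g ^ k := by
      rw [Int.toNat_of_nonneg (Int.emod_nonneg k (by omega))]
      rw [← hordu]
      exact zpow_mod_orderOf g k
    have h2 : g ^ ((k % (N : ℤ)).toNat) = Units.mk0 x hx := by
      rw [← hk, ← h1, zpow_natCast]
    calc γ ^ ((k % (N : ℤ)).toNat) = ((g ^ ((k % (N : ℤ)).toNat) : Kˣ) : K) := by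
          rw [Units.val_pow_eq_pow_val]
    _ = x := by rw [h2, Units.val_mk0]
  -- a power basis with generator γ
  have hint : IsIntegral (ZMod 2) γ := IsIntegral.of_finite (ZMod 2) γ
  have htop : Algebra.adjoin (ZMod 2) ({γ} : Set K) = ⊤ := by
    rw [eq_top_iff]
    intro x _
    by_cases hx : x = 0
    · rw [hx]; exact zero_mem _
    · obtain ⟨p, hp⟩ := dlog x hx
      exact hp ▸ pow_mem (Algebra.self_mem_adjoin_singleton (ZMod 2) γ) p
  set pb : PowerBasis (ZMod 2) K :=
    (Algebra.adjoin.powerBasis hint).map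
      ((Subalgebra.equivOfEq _ _ htop).trans Subalgebra.topEquiv) with hpb
  have hpbgen : pb.gen = γ := by
    simp [hpb, Algebra.adjoin.powerBasis]
  have hpbdim : pb.dim = m := by
    have h1 := pb.finrank
    rw [GaloisField.finrank 2 (show m ≠ 0 by omega)] at h1
    omega
  have hbasis : ∀ i : Fin pb.dim, pb.basis i = γ ^ (i : ℕ) := by
    intro i; rw [pb.basis_eq_pow, hpbgen]
  have hdim0 : 0 < pb.dim := by omega
  -- the functional
  set φ : K →ₗ[ZMod 2] ZMod 2 := pb.basis.coord ⟨0, hdim0⟩ with hφ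
  have hφne : φ (pb.basis ⟨0, hdim0⟩) = 1 := by
    rw [hφ, Module.Basis.coord_apply, Module.Basis.repr_self, Finsupp.single_eq_same]
  -- key injectivity: an element orthogonal to the first m powers is zero
  have key : ∀ x : K, (∀ i, i < m → φ (x * γ ^ i) = 0) → x = 0 := by
    intro x hx
    by_contra hx0
    have hψ : (φ.comp (LinearMap.mulLeft (ZMod 2) x)) = 0 := by
      apply pb.basis.ext
      intro i
      simp only [LinearMap.comp_apply, LinearMap.mulLeft_apply, LinearMap.zero_apply]
      rw [hbasis i]
      have hi : (i : ℕ) < m := by have h2 := i.2; omega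
      exact hx i hi
    have hcontr := congrArg (fun ψ : K →ₗ[ZMod 2] ZMod 2 =>
      ψ (x⁻¹ * pb.basis ⟨0, hdim0⟩)) hψ
    simp only [LinearMap.comp_apply, LinearMap.mulLeft_apply, LinearMap.zero_apply] at hcontr
    rw [← mul_assoc, mul_inv_cancel₀ hx0, one_mul, hφne] at hcontr
    exact one_ne_zero hcontr
  -- pigeonhole: an element hE ≠ 0 orthogonal to the first m-1 powers
  have hcard' : Fintype.card (Fin (m - 1) → ZMod 2) < Fintype.card K := by
    simp only [Fintype.card_fun, Fintype.card_fin, ZMod.card, hcard]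
    exact Nat.pow_lt_pow_right (by norm_num) (by omega)
  obtain ⟨x, y, hxy, hGxy⟩ :=
    Fintype.exists_ne_map_eq_of_card_lt
      (fun (x : K) (i : Fin (m - 1)) => φ (x * γ ^ (i : ℕ))) hcard'
  set hE : K := x - y with hhE
  have hE0 : hE ≠ 0 := sub_ne_zero.mpr hxy
  have hEzero : ∀ i, i < m - 1 → φ (hE * γ ^ i) = 0 := by
    intro i hi
    have h1 := congrFun hGxy ⟨i, hi⟩
    simp only at h1
    rw [hhE, sub_mul, map_sub, h1, sub_self]
  -- the run position
  obtain ⟨r, hr⟩ := dlog hE hE0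
  -- the sequence
  set f : ℕ → Bool := fun j => decide (φ (γ ^ j) = 1) with hf
  have fperiod : ∀ j, f (j + N) = f j := by
    intro j
    simp only [hf, pow_add, hγN, mul_one]
  have fval : ∀ a b : ℕ, φ (γ ^ a) = φ (γ ^ b) → f a = f b := by
    intro a b hab; simp only [hf, hab]
  have fval' : ∀ a b : ℕ, f a = f b → φ (γ ^ a) = φ (γ ^ b) := by
    intro a b hab; exact zmod2_eq_of_decide hab
  refine ⟨f, r, fperiod, ?_, ?_, ?_, ?_⟩
  · -- injectivity of windows
    intro p q hw
    have hx : γ ^ p - γ ^ q = 0 := by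
      apply key
      intro i hi
      rw [sub_mul, map_sub, ← pow_add, ← pow_add]
      rw [fval' _ _ (hw i hi), sub_self]
    have h1 : γ ^ p = γ ^ q := sub_eq_zero.mp hx
    have h1' : g ^ p = g ^ q := by
      apply Units.ext
      rwa [Units.val_pow_eq_pow_val, Units.val_pow_eq_pow_val]
    have h2 := (pow_eq_pow_iff_modEq).mp h1'
    rwa [hordu] at h2
  · -- the run
    intro i hi
    simp only [hf, decide_eq_false_iff_not]
    intro hcon
    have h1 := hEzero i hi
    rw [← hr, ← pow_add] at h1
    rw [hcon] at h1
    exact one_ne_zero h1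
  · -- no all-false window
    intro a
    by_contra hcon
    push_neg at hcon
    have hz : (γ ^ a) = 0 := by
      apply key
      intro i hi
      have h1 := hcon i hi
      have h0 : φ (γ ^ (a + i)) = 0 := by
        apply zmod2_eq_zero_of_ne_one
        intro hcc
        apply h1
        simp [hf, hcc]
      rwa [← pow_add]
    exact pow_ne_zero a hγ0 hz
  · -- the pair for cutting
    intro l hl0 hlN
    have hγl : γ ^ l ≠ 1 := by
      intro hcon
      have hdvd := orderOf_dvd_of_pow_eq_one hcon
      rw [hord] at hdvd
      exact absurd (Nat.le_of_dvd hl0 hdvd) (by omega)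
    have hu : (1 : K) - γ ^ l ≠ 0 := sub_ne_zero.mpr (Ne.symm hγl)
    have hx0 : hE * ((1 : K) - γ ^ l)⁻¹ ≠ 0 :=
      mul_ne_zero hE0 (inv_ne_zero hu)
    obtain ⟨p, hp⟩ := dlog _ hx0
    refine ⟨p, fun s hs => ?_⟩
    apply fval
    have hdiff : γ ^ (p + s) - γ ^ (p + l + s) = hE * γ ^ s := by
      have : γ ^ (p + s) - γ ^ (p + l + s) = γ ^ p * ((1 : K) - γ ^ l) * γ ^ s := by
        ring
      rw [this, hp, mul_assoc _ _ ((1:K) - γ ^ l), inv_mul_cancel₀ hu, mul_one]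
    have h1 : φ (γ ^ (p + s)) - φ (γ ^ (p + l + s)) = 0 := by
      rw [← map_sub, hdiff]
      exact hEzero s hs
    linear_combination h1

/-! ### The combinatorial construction for each length -/

lemma exists_allDistinct_pow (m L : ℕ) (hm : 1 ≤ m) (h1 : 2 ^ (m - 1) < L)
    (h2 : L ≤ 2 ^ m) : ∃ C : ZMod L → Bool, AllDistinct m C := by
  obtain ⟨f, r, fper, finj, frun, fnz, fpair⟩ := exists_mseq m hm
  set N := 2 ^ m - 1 with hN
  have h2m : 2 ≤ 2 ^ m := by
    calc 2 = 2 ^ 1 := rfl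
    _ ≤ 2 ^ m := Nat.pow_le_pow_right (by norm_num) hm
  have hmN : m ≤ N := by
    have := @Nat.lt_two_pow_self m
    omega
  have hmL : m < L := by
    have := @Nat.lt_two_pow_self (m - 1)
    omega
  have hL0 : 0 < L := by omega
  haveI : NeZero L := ⟨by omega⟩
  -- f only depends on the argument mod N
  have fmul : ∀ (q a : ℕ), f (a + q * N) = f a := by
    intro q
    induction q with
    | zero => intro a; simp
    | succ q ih =>
      intro a
      have : a + (q + 1) * N = (a + q * N) + N := by ring
      rw [this, fper, ih]
  have fmod : ∀ a, f (a % N) = f a := by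
    intro a
    conv_rhs => rw [← Nat.mod_add_div' a N]
    rw [fmul]
  -- value of C at a shifted point
  have hval : ∀ (z : ZMod L) (k : ℕ), (z + (k : ℕ) : ZMod L).val = (z.val + k) % L := by
    intro z k
    rw [ZMod.val_add, ZMod.val_natCast]
    conv_rhs => rw [Nat.add_mod]
    rw [Nat.mod_eq_of_lt (ZMod.val_lt z)]
  rcases lt_trichotomy L N with hLN | hLN | hLN
  · -- cutting case : L < N
    obtain ⟨p, hp⟩ := fpair L (by omega) hLN
    refine ⟨fun z => f (p + z.val), ?_⟩
    intro i j hw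
    have key : ∀ t k : ℕ, t < L → k < m → f (p + (t + k) % L) = f (p + t + k) := by
      intro t k ht hk
      rcases Nat.lt_or_ge (t + k) L with hc | hc
      · rw [Nat.mod_eq_of_lt hc, add_assoc]
      · have hmod : (t + k) % L = t + k - L := by
          rw [Nat.mod_eq_sub_mod hc, Nat.mod_eq_of_lt (by omega)]
        rw [hmod]
        have hs : t + k - L < m - 1 := by omega
        have h3 := hp (t + k - L) hs
        rw [h3]
        congr 1
        omega
    have hwk : ∀ k, k < m → f (p + i.val + k) = f (p + j.val + k) := by
      intro k hk
      have h3 := hw ⟨k, hk⟩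
      simp only [hval] at h3
      rw [key i.val k (ZMod.val_lt i) hk, key j.val k (ZMod.val_lt j) hk] at h3
      exact h3
    have hmodeq := finj (p + i.val) (p + j.val) hwk
    have hcanc : i.val ≡ j.val [MOD N] := Nat.ModEq.add_left_cancel' p hmodeq
    have : i.val = j.val := by
      have hi := ZMod.val_lt i
      have hj := ZMod.val_lt j
      unfold Nat.ModEq at hcanc
      rwa [Nat.mod_eq_of_lt (by omega), Nat.mod_eq_of_lt (by omega)] at hcanc
    exact ZMod.val_injective L this
  · -- exact case : L = N
    refine ⟨fun z => f z.val, ?_⟩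
    intro i j hw
    have hwk : ∀ k, k < m → f (i.val + k) = f (j.val + k) := by
      intro k hk
      have h3 := hw ⟨k, hk⟩
      simp only [hval] at h3
      have e1 : ∀ a : ℕ, a % L = a % N := fun a => by rw [hLN]
      rw [e1, e1, fmod, fmod] at h3
      exact h3
    have hmodeq := finj i.val j.val hwk
    have : i.val = j.val := by
      have hi := ZMod.val_lt i
      have hj := ZMod.val_lt j
      unfold Nat.ModEq at hmodeq
      rwa [Nat.mod_eq_of_lt (by omega), Nat.mod_eq_of_lt (by omega)] at hmodeq
    exact ZMod.val_injective L this
  · -- full case : L = N + 1 = 2 ^ m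
    have hLeq : L = N + 1 := by omega
    refine ⟨fun z => if z.val = N then false else f (r + z.val), ?_⟩
    intro i j hw
    -- window formula for positions < N
    have key : ∀ t k : ℕ, t < N → k < m →
        (if (t + k) % L = N then false else f (r + (t + k) % L)) = f (r + t + k) := by
      intro t k ht hk
      rcases Nat.lt_or_ge (t + k) L with hc | hc
      · rw [Nat.mod_eq_of_lt hc]
        by_cases he : t + k = N
        · rw [if_pos he]
          have hm2 : 2 ≤ m := by omega
          have h3 : r + t + k = r + N := by omega
          rw [h3, fper]
          have h4 := frun 0 (by omega)
          simpa using h4.symm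
        · rw [if_neg he, add_assoc]
      · have hmod : (t + k) % L = t + k - L := by
          rw [Nat.mod_eq_sub_mod hc, Nat.mod_eq_of_lt (by omega)]
        have hs1 : 1 ≤ t + k - N := by omega
        have hs2 : t + k - N ≤ m - 2 := by omega
        rw [hmod, if_neg (by omega)]
        have hl : f (r + (t + k - L)) = false := frun _ (by omega)
        have hr2 : f (r + t + k) = false := by
          have h3 : r + t + k = (r + (t + k - N)) + N := by omega
          rw [h3, fper]
          exact frun _ (by omega)
        rw [hl, hr2]
    -- window formula at position N
    have keyN : ∀ k : ℕ, k < m →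
        (if (N + k) % L = N then false else f (r + (N + k) % L)) = false := by
      intro k hk
      rcases Nat.eq_zero_or_pos k with hk0 | hk0
      · subst hk0
        rw [Nat.mod_eq_of_lt (by omega), if_pos (by omega)]
      · have hmod : (N + k) % L = k - 1 := by
          rw [Nat.mod_eq_sub_mod (by omega), Nat.mod_eq_of_lt (by omega)]
          omega
        rw [hmod, if_neg (by omega)]
        exact frun _ (by omega)
    by_cases hi : i.val = N <;> by_cases hj : j.val = N
    · exact ZMod.val_injective L (hi.trans hj.symm)
    · exfalso
      obtain ⟨k, hk, htrue⟩ := fnz (r + j.val)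
      have h3 := hw ⟨k, hk⟩
      simp only [hval] at h3
      rw [hi] at h3
      have hjlt : j.val < N := by
        have := ZMod.val_lt j
        omega
      rw [keyN k hk, key j.val k hjlt hk] at h3
      rw [htrue] at h3
      exact Bool.false_ne_true h3
    · exfalso
      obtain ⟨k, hk, htrue⟩ := fnz (r + i.val)
      have h3 := hw ⟨k, hk⟩
      simp only [hval] at h3
      rw [hj] at h3
      have hilt : i.val < N := by
        have := ZMod.val_lt i
        omega
      rw [keyN k hk, key i.val k hilt hk] at h3
      rw [htrue] at h3
      exact Bool.false_ne_true h3.symm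
    · have hilt : i.val < N := by have := ZMod.val_lt i; omega
      have hjlt : j.val < N := by have := ZMod.val_lt j; omega
      have hwk : ∀ k, k < m → f (r + i.val + k) = f (r + j.val + k) := by
        intro k hk
        have h3 := hw ⟨k, hk⟩
        simp only [hval] at h3
        rw [key i.val k hilt hk, key j.val k hjlt hk] at h3
        exact h3
      have hmodeq := finj (r + i.val) (r + j.val) hwk
      have hcanc : i.val ≡ j.val [MOD N] := Nat.ModEq.add_left_cancel' r hmodeq
      have : i.val = j.val := by
        unfold Nat.ModEq at hcanc
        rwa [Nat.mod_eq_of_lt (by omega), Nat.mod_eq_of_lt (by omega)] at hcanc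
      exact ZMod.val_injective L this

theorem cutdown_exists (n L : ℕ) (hn : 1 ≤ n) (hL1 : 1 ≤ L) (hL2 : L ≤ 2 ^ n) :
    ∃ C : ZMod L → Bool, AllDistinct n C := by
  rcases eq_or_lt_of_le hL1 with hL | hL
  · refine ⟨fun _ => false, ?_⟩
    intro i j _
    subst hL
    exact Subsingleton.elim i j
  · set m := Nat.log 2 (L - 1) + 1 with hm
    have hL1' : L - 1 ≠ 0 := by omega
    have hlow : 2 ^ (m - 1) < L := by
      have h3 := Nat.pow_log_le_self 2 hL1'
      have : m - 1 = Nat.log 2 (L - 1) := by omega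
      rw [this]
      omega
    have hhigh : L ≤ 2 ^ m := by
      have h3 := Nat.lt_pow_succ_log_self (by norm_num : 1 < 2) (L - 1)
      simp only [hm]
      omega
    have hmn : m ≤ n := by
      have h3 : 2 ^ (m - 1) < 2 ^ n := lt_of_lt_of_le hlow hL2
      have h4 := (Nat.pow_lt_pow_iff_right (by norm_num : 1 < 2)).mp h3
      omega
    obtain ⟨C, hC⟩ := exists_allDistinct_pow m L (by omega) hlow hhigh
    exact ⟨C, allDistinct_mono hmn hC⟩
end

section
/- Let C be a rotation-equivalence class of binary strings of length n whose members contain at least one 1, and let ν = ν_1 ν_2 ⋯ ν_n be the unique necklace in C. Then α = 1 ν_1 ν_2 ⋯ ν_{n−1} is the unique string a_1 a_2 ⋯ a_n in C such that a_1 = 1 and a_2 a_3 ⋯ a_n 1 is a necklace. -/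
open List

theorem List.false_cons_dropLast_lt : ∀ {l : List Bool}, true ∈ l → false :: l.dropLast < l
  | [], h => absurd h not_mem_nil
  | [b], h => by
    obtain rfl : b = true := by simpa using h
    exact Lex.rel (by decide)
  | true :: _ :: _, _ => Lex.rel (by decide)
  | false :: c :: t, h => by
    rw [dropLast_cons_cons]
    exact Lex.cons (false_cons_dropLast_lt (by simpa using h))

namespace IsNecklace

variable {l l' : List Bool}

theorem le_of_isRotated (hl : IsNecklace l) (hr : l ~r l') : l ≤ l' := by
  obtain ⟨r, hle, rfl⟩ := isRotated_iff_mod.mp hr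
  rcases hle.lt_or_eq with hlt | rfl
  · exact hl r hlt
  · rw [rotate_length]

theorem eq_of_isRotated (hl : IsNecklace l) (hl' : IsNecklace l') (hr : l ~r l') : l = l' :=
  le_antisymm (hl.le_of_isRotated hr) (hl'.le_of_isRotated hr.symm)

theorem dropLast_append_true (hl : IsNecklace l) (h1 : true ∈ l) : l.dropLast ++ [true] = l := by
  have hne : l ≠ [] := ne_nil_of_mem h1
  have hle := hl.le_of_isRotated (IsRotated.cons_getLast_dropLast l hne).symm
  cases hlast : l.getLast hne
  · rw [hlast] at hle
    exact absurd hle (false_cons_dropLast_lt h1).not_ge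
  · rw [← hlast]
    exact dropLast_append_getLast hne

end IsNecklace

theorem unique_bridge_state_general (ν : List Bool)
    (hν : IsNecklace ν) (h1 : true ∈ ν) :
    (∃ r : ℕ, true :: ν.dropLast = ν.rotate r) ∧
      IsNecklace (ν.dropLast ++ [true]) ∧
      ∀ a : List Bool, (∃ r : ℕ, a = ν.rotate r) → a.headI = true →
        IsNecklace (a.tail ++ [true]) → a = true :: ν.dropLast := by
  have hlast := hν.dropLast_append_true h1
  refine ⟨?_, by rwa [hlast], ?_⟩
  · have hrot := rotate_append_length_eq ν.dropLast [true]
    rw [hlast] at hrot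
    exact ⟨_, hrot.symm⟩
  · rintro (_ | ⟨_ | _, t⟩) ⟨r, hr⟩ hhead hneck
    iterate 2 exact absurd hhead Bool.false_ne_true
    have hrot : ν ~r t ++ [true] :=
      (hr ▸ IsRotated.forall ν r).symm.trans IsRotated.cons_append_singleton
    have hν_eq : ν = t ++ [true] := hν.eq_of_isRotated hneck hrot
    rw [hν_eq, dropLast_concat]

theorem unique_bridge_state (n : ℕ) (hn : 0 < n) (ν : List Bool)
    (hlen : ν.length = n) (hν : IsNecklace ν) (h1 : true ∈ ν) :
    (∃ r : ℕ, true :: ν.dropLast = ν.rotate r) ∧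
      IsNecklace (ν.dropLast ++ [true]) ∧
      ∀ a : List Bool, (∃ r : ℕ, a = ν.rotate r) → a.headI = true →
        IsNecklace (a.tail ++ [true]) → a = true :: ν.dropLast :=
  unique_bridge_state_general ν hν h1
end
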